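/- For every graph G with edge set E_G and degrees d_v, and every p ∈ [1/2, 1], the 2-level approximated randomization overlap L_{F^{(≤2)}}(ρ^p_G) = p^{|E_G|} + (1/4)(1-p)p^{|E_G|-1}|E_G| + (1/16)(1-p)²p^{|E_G|-2}[C(|E_G|,2) + 3 Σ_{v∈V} C(d_v,2)] is a lower bound on the full randomization overlap L(ρ^p_G) = Tr[|G⟩⟨G| ρ^p_G]. -/

import Mathlib

open scoped BigOperators

/-- The graph state amplitude function for edge set `E` on `n` qubits:
`|G⟩ = ∏ CZ |+⟩^⊗n`, whose amplitude on a computational basis state `x` is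
`2^(-n/2)` times `(-1)` for every edge both of whose endpoints are in state `1`. -/
noncomputable def gs (n : ℕ) (E : Finset (Sym2 (Fin n))) : (Fin n → Fin 2) → ℂ :=
  fun x => ((Real.sqrt 2)⁻¹ : ℝ) ^ n *
    ∏ e ∈ E, (if ∀ i ∈ e, x i = 1 then (-1 : ℂ) else 1)

/-- Inner product `⟨v|w⟩` on the `n`-qubit state space. -/
noncomputable def ip {n : ℕ} (v w : (Fin n → Fin 2) → ℂ) : ℂ :=
  ∑ x, (starRingEnd ℂ) (v x) * w x

/-- The edge set of the complete graph on `n` labeled vertices. -/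
def completeEdges (n : ℕ) : Finset (Sym2 (Fin n)) :=
  Finset.univ.filter fun e => ¬ e.IsDiag

namespace TL

open Finset

noncomputable def chi {n : ℕ} (x : Fin n → Fin 2) (e : Sym2 (Fin n)) : ℂ :=
  if ∀ i ∈ e, x i = 1 then (-1 : ℂ) else 1

variable {n : ℕ}

lemma chi_sq (x : Fin n → Fin 2) (e : Sym2 (Fin n)) : chi x e * chi x e = 1 := by
  unfold chi; split_ifs <;> ring

lemma conj_chi (x : Fin n → Fin 2) (e : Sym2 (Fin n)) :
    (starRingEnd ℂ) (chi x e) = chi x e := by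
  unfold chi; split_ifs <;> simp

lemma sum_one : ∑ _x : Fin n → Fin 2, (1 : ℂ) = 2 ^ n := by
  simp [Finset.card_univ]

lemma sum_ind (S : Finset (Fin n)) :
    ∑ x : Fin n → Fin 2, (if ∀ v ∈ S, x v = 1 then (1 : ℂ) else 0) = 2 ^ (n - S.card) := by
  have h1 : ∀ x : Fin n → Fin 2, (if ∀ v ∈ S, x v = 1 then (1 : ℂ) else 0)
      = ∏ v : Fin n, (if v ∈ S then (if x v = 1 then (1 : ℂ) else 0) else 1) := by
    intro x
    rw [Finset.prod_ite_mem Finset.univ S (fun v => if x v = 1 then (1:ℂ) else 0),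
      Finset.univ_inter, Finset.prod_boole]
    congr 1
  simp_rw [h1]
  rw [← Fintype.piFinset_univ,
    Finset.sum_prod_piFinset (Finset.univ : Finset (Fin 2))
      (fun v a => if v ∈ S then (if a = 1 then (1:ℂ) else 0) else 1)]
  have h2 : ∀ v : Fin n, (∑ a : Fin 2, if v ∈ S then (if a = 1 then (1:ℂ) else 0) else 1)
      = if v ∈ S then 1 else 2 := by
    intro v; by_cases hv : v ∈ S <;> simp [hv, Fin.sum_univ_two]
  simp_rw [h2]
  rw [Finset.prod_ite, Finset.prod_const, Finset.prod_const, one_pow, one_mul]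
  congr 1
  have : (Finset.univ.filter fun v : Fin n => v ∉ S) = Sᶜ := by ext v; simp
  rw [this, Finset.card_compl S, Fintype.card_fin]

lemma gs_eq (E : Finset (Sym2 (Fin n))) (x : Fin n → Fin 2) :
    gs n E x = (((Real.sqrt 2)⁻¹ ^ n : ℝ) : ℂ) * ∏ e ∈ E, chi x e := by
  unfold gs chi; norm_num

lemma prod_chi_sdiff {E F : Finset (Sym2 (Fin n))} (hFE : F ⊆ E) (x : Fin n → Fin 2) :
    (∏ e ∈ E, chi x e) * ∏ e ∈ F, chi x e = ∏ e ∈ E \ F, chi x e := by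
  rw [← Finset.prod_sdiff hFE, mul_assoc, ← Finset.prod_mul_distrib]
  simp [chi_sq]

lemma half_pow_mul {k : ℕ} (hk : k ≤ n) : (1/2 : ℂ) ^ n * 2 ^ (n - k) = (1/2 : ℂ) ^ k := by
  have h : n - k + k = n := Nat.sub_add_cancel hk
  rw [← h, pow_add]
  simp only [Nat.add_sub_cancel]
  rw [mul_right_comm, ← mul_pow]
  norm_num

lemma ip_sdiff (E D : Finset (Sym2 (Fin n))) (hD : D ⊆ E) :
    ip (gs n E) (gs n (E \ D)) = (1/2 : ℂ) ^ n * ∑ x, ∏ e ∈ D, chi x e := by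
  have hED : E \ (E \ D) = D := Finset.sdiff_sdiff_eq_self hD
  unfold ip
  rw [Finset.mul_sum]
  refine Finset.sum_congr rfl fun x _ => ?_
  rw [gs_eq, gs_eq, map_mul, map_prod]
  simp_rw [conj_chi, Complex.conj_ofReal]
  have hr : (((Real.sqrt 2)⁻¹ ^ n : ℝ) : ℂ) * (((Real.sqrt 2)⁻¹ ^ n : ℝ) : ℂ)
      = (1/2 : ℂ) ^ n := by
    rw [← Complex.ofReal_mul, ← mul_pow, ← mul_inv,
      Real.mul_self_sqrt (by norm_num : (0:ℝ) ≤ 2)]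
    push_cast
    norm_num
  calc (((Real.sqrt 2)⁻¹ ^ n : ℝ) : ℂ) * (∏ e ∈ E, chi x e) *
        ((((Real.sqrt 2)⁻¹ ^ n : ℝ) : ℂ) * ∏ e ∈ E \ D, chi x e)
      = ((((Real.sqrt 2)⁻¹ ^ n : ℝ) : ℂ) * (((Real.sqrt 2)⁻¹ ^ n : ℝ) : ℂ)) *
        ((∏ e ∈ E, chi x e) * ∏ e ∈ E \ D, chi x e) := by ring
    _ = (1/2 : ℂ) ^ n * ∏ e ∈ D, chi x e := by
        rw [hr, prod_chi_sdiff Finset.sdiff_subset, hED]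

lemma ip_self (E : Finset (Sym2 (Fin n))) : ip (gs n E) (gs n E) = 1 := by
  have h := ip_sdiff E ∅ (Finset.empty_subset E)
  rw [Finset.sdiff_empty] at h
  rw [h]
  simp only [Finset.prod_empty]
  rw [sum_one, ← mul_pow]
  norm_num

lemma chi_eq_ind (x : Fin n → Fin 2) (e : Sym2 (Fin n)) :
    chi x e = 1 - 2 * (if ∀ i ∈ e, x i = 1 then (1 : ℂ) else 0) := by
  unfold chi; split_ifs <;> ring

lemma exists_vfinset (e : Sym2 (Fin n)) (he : ¬ e.IsDiag) :
    ∃ S : Finset (Fin n), S.card = 2 ∧ ∀ v, v ∈ S ↔ v ∈ e := by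
  induction e using Sym2.ind with
  | _ a b =>
    refine ⟨{a, b}, Finset.card_pair fun h => he (Sym2.mk_isDiag_iff.mpr h), ?_⟩
    intro v; simp [Sym2.mem_iff]

lemma two_le_of_not_isDiag {e : Sym2 (Fin n)} (he : ¬ e.IsDiag) : 2 ≤ n := by
  obtain ⟨S, hS2, -⟩ := exists_vfinset e he
  calc 2 = S.card := hS2.symm
    _ ≤ Fintype.card (Fin n) := Finset.card_le_univ S
    _ = n := Fintype.card_fin n

lemma sum_chi_single {e : Sym2 (Fin n)} (he : ¬ e.IsDiag) :
    ∑ x : Fin n → Fin 2, chi x e = 2 ^ n - 2 * 2 ^ (n - 2) := by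
  obtain ⟨S, hS2, hSv⟩ := exists_vfinset e he
  have hcond : ∀ x : Fin n → Fin 2, (∀ i ∈ e, x i = 1) ↔ (∀ v ∈ S, x v = 1) :=
    fun x => ⟨fun h v hv => h v ((hSv v).mp hv), fun h i hi => h i ((hSv i).mpr hi)⟩
  simp_rw [chi_eq_ind]
  rw [Finset.sum_sub_distrib, ← Finset.mul_sum, sum_one]
  have hs : ∑ x : Fin n → Fin 2, (if ∀ i ∈ e, x i = 1 then (1:ℂ) else 0) = 2 ^ (n - 2) := by
    have h := sum_ind S
    rw [hS2] at h
    rw [← h]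
    exact Finset.sum_congr rfl fun x _ => if_congr (hcond x) rfl rfl
  rw [hs]

lemma ip_single {E : Finset (Sym2 (Fin n))} {e : Sym2 (Fin n)} (heE : e ∈ E)
    (he : ¬ e.IsDiag) : ip (gs n E) (gs n (E \ {e})) = 1 / 2 := by
  have h2n : 2 ≤ n := two_le_of_not_isDiag he
  rw [ip_sdiff E {e} (Finset.singleton_subset_iff.mpr heE)]
  simp_rw [Finset.prod_singleton]
  rw [sum_chi_single he, mul_sub]
  have h1 : (1/2 : ℂ) ^ n * 2 ^ n = 1 := by rw [← mul_pow]; norm_num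
  have h2 : (1/2 : ℂ) ^ n * (2 * 2 ^ (n - 2)) = 1 / 2 := by
    rw [mul_left_comm, half_pow_mul h2n]; norm_num
  rw [h1, h2]
  norm_num

lemma ip_pair {E : Finset (Sym2 (Fin n))} {e f : Sym2 (Fin n)} (heE : e ∈ E) (hfE : f ∈ E)
    (he : ¬ e.IsDiag) (hf : ¬ f.IsDiag) (hef : e ≠ f) :
    ip (gs n E) (gs n (E \ {e, f}))
      = 4 * (1/2 : ℂ) ^ (if ∃ v, v ∈ e ∧ v ∈ f then 3 else 4) := by
  obtain ⟨Se, hSe2, hSev⟩ := exists_vfinset e he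
  obtain ⟨Sf, hSf2, hSfv⟩ := exists_vfinset f hf
  have hcui := Finset.card_union_add_card_inter Se Sf
  have hk : (Se ∪ Sf).card = if ∃ v, v ∈ e ∧ v ∈ f then 3 else 4 := by
    split_ifs with hadj
    · obtain ⟨v, hve, hvf⟩ := hadj
      have hinter : Se ∩ Sf = {v} := by
        ext w
        simp only [Finset.mem_inter, Finset.mem_singleton]
        constructor
        · rintro ⟨hwe, hwf⟩
          by_contra hwv
          exact hef ((((Sym2.mem_and_mem_iff hwv).mp ⟨(hSev w).mp hwe, hve⟩)).trans
            (((Sym2.mem_and_mem_iff hwv).mp ⟨(hSfv w).mp hwf, hvf⟩)).symm)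
        · rintro rfl; exact ⟨(hSev _).mpr hve, (hSfv _).mpr hvf⟩
      rw [hinter, hSe2, hSf2, Finset.card_singleton] at hcui
      omega
    · have hinter : Se ∩ Sf = ∅ := by
        ext w
        simp only [Finset.mem_inter, Finset.notMem_empty, iff_false, not_and]
        intro hwe hwf
        exact hadj ⟨w, (hSev w).mp hwe, (hSfv w).mp hwf⟩
      rw [hinter, hSe2, hSf2, Finset.card_empty] at hcui
      omega
  rw [← hk]
  have hkn : (Se ∪ Sf).card ≤ n :=
    le_trans (Finset.card_le_univ _) (le_of_eq (Fintype.card_fin n))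
  have hsub : ({e, f} : Finset (Sym2 (Fin n))) ⊆ E := by
    intro g hg
    rcases Finset.mem_insert.mp hg with h | h
    · exact h ▸ heE
    · exact (Finset.mem_singleton.mp h) ▸ hfE
  rw [ip_sdiff E {e, f} hsub]
  simp_rw [Finset.prod_pair hef]
  have hpt : ∀ x : Fin n → Fin 2, chi x e * chi x f
      = 1 - 2 * (if ∀ v ∈ Se, x v = 1 then (1:ℂ) else 0)
          - 2 * (if ∀ v ∈ Sf, x v = 1 then (1:ℂ) else 0)
          + 4 * (if ∀ v ∈ Se ∪ Sf, x v = 1 then (1:ℂ) else 0) := by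
    intro x
    have he' : (∀ i ∈ e, x i = 1) ↔ (∀ v ∈ Se, x v = 1) :=
      ⟨fun h v hv => h v ((hSev v).mp hv), fun h i hi => h i ((hSev i).mpr hi)⟩
    have hf' : (∀ i ∈ f, x i = 1) ↔ (∀ v ∈ Sf, x v = 1) :=
      ⟨fun h v hv => h v ((hSfv v).mp hv), fun h i hi => h i ((hSfv i).mpr hi)⟩
    have hu : (∀ v ∈ Se ∪ Sf, x v = 1) ↔ ((∀ v ∈ Se, x v = 1) ∧ (∀ v ∈ Sf, x v = 1)) := by
      simp only [Finset.mem_union, or_imp, forall_and]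
    unfold chi
    rw [if_congr he' rfl rfl, if_congr hf' rfl rfl, if_congr hu rfl rfl]
    rcases Classical.em (∀ v ∈ Se, x v = 1) with h1 | h1 <;>
      rcases Classical.em (∀ v ∈ Sf, x v = 1) with h2 | h2
    · simp only [if_pos h1, if_pos h2, if_pos (⟨h1, h2⟩ : (∀ v ∈ Se, x v = 1) ∧ (∀ v ∈ Sf, x v = 1))]; ring
    · simp only [if_pos h1, if_neg h2, if_neg (fun h : (∀ v ∈ Se, x v = 1) ∧ (∀ v ∈ Sf, x v = 1) => h2 h.2)]; ring
    · simp only [if_neg h1, if_pos h2, if_neg (fun h : (∀ v ∈ Se, x v = 1) ∧ (∀ v ∈ Sf, x v = 1) => h1 h.1)]; ring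
    · simp only [if_neg h1, if_neg h2, if_neg (fun h : (∀ v ∈ Se, x v = 1) ∧ (∀ v ∈ Sf, x v = 1) => h1 h.1)]; ring
  simp_rw [hpt]
  rw [Finset.sum_add_distrib, Finset.sum_sub_distrib, Finset.sum_sub_distrib,
    ← Finset.mul_sum, ← Finset.mul_sum, ← Finset.mul_sum, sum_one, sum_ind, sum_ind, sum_ind,
    hSe2, hSf2]
  have h2n : 2 ≤ n := two_le_of_not_isDiag he
  have h1 : (1/2 : ℂ) ^ n * 2 ^ n = 1 := by rw [← mul_pow]; norm_num
  have h2 : (1/2 : ℂ) ^ n * (2 * 2 ^ (n - 2)) = 1 / 2 := by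
    rw [mul_left_comm, half_pow_mul h2n]; norm_num
  have h3 : (1/2 : ℂ) ^ n * (4 * 2 ^ (n - (Se ∪ Sf).card))
      = 4 * (1/2 : ℂ) ^ (Se ∪ Sf).card := by
    rw [mul_left_comm, half_pow_mul hkn]
  rw [mul_add, mul_sub, mul_sub, h1, h2, h3]
  ring

lemma adj_count (G : SimpleGraph (Fin n)) [DecidableRel G.Adj] :
    ∑ D ∈ G.edgeFinset.powersetCard 2, (if ∃ v, ∀ e ∈ D, v ∈ e then (1:ℝ) else 0)
      = ∑ v : Fin n, (((G.degree v).choose 2 : ℕ) : ℝ) := by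
  classical
  have hstep : ∀ D ∈ G.edgeFinset.powersetCard 2,
      (if ∃ v, ∀ e ∈ D, v ∈ e then (1:ℝ) else 0)
        = ((Finset.univ.filter fun v : Fin n => ∀ e ∈ D, v ∈ e).card : ℝ) := by
    intro D hD
    obtain ⟨hDE, hc⟩ := Finset.mem_powersetCard.mp hD
    obtain ⟨e, f, hef, rfl⟩ := Finset.card_eq_two.mp hc
    by_cases h : ∃ v, ∀ g ∈ ({e, f} : Finset (Sym2 (Fin n))), v ∈ g
    · obtain ⟨v, hv⟩ := h
      rw [if_pos ⟨v, hv⟩]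
      have hflt : (Finset.univ.filter fun w : Fin n =>
          ∀ g ∈ ({e, f} : Finset (Sym2 (Fin n))), w ∈ g) = {v} := by
        ext w
        simp only [Finset.mem_filter, Finset.mem_univ, true_and, Finset.mem_singleton]
        constructor
        · intro hw
          by_contra hwv
          have hwe : w ∈ e := hw e (Finset.mem_insert_self e {f})
          have hwf : w ∈ f := hw f (Finset.mem_insert_of_mem (Finset.mem_singleton_self f))
          have hve : v ∈ e := hv e (Finset.mem_insert_self e {f})
          have hvf : v ∈ f := hv f (Finset.mem_insert_of_mem (Finset.mem_singleton_self f))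
          exact hef (((Sym2.mem_and_mem_iff hwv).mp ⟨hwe, hve⟩).trans
            ((Sym2.mem_and_mem_iff hwv).mp ⟨hwf, hvf⟩).symm)
        · rintro rfl; exact hv
      rw [hflt]
      simp
    · rw [if_neg h]
      have hflt : (Finset.univ.filter fun w : Fin n =>
          ∀ g ∈ ({e, f} : Finset (Sym2 (Fin n))), w ∈ g) = ∅ := by
        ext w
        simp only [Finset.mem_filter, Finset.mem_univ, true_and, Finset.notMem_empty,
          iff_false]
        intro hw; exact h ⟨w, hw⟩
      rw [hflt]
      simp
  rw [Finset.sum_congr rfl hstep]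
  have hswap : ∀ D : Finset (Sym2 (Fin n)),
      ((Finset.univ.filter fun v : Fin n => ∀ e ∈ D, v ∈ e).card : ℝ)
        = ∑ v : Fin n, (if ∀ e ∈ D, v ∈ e then (1:ℝ) else 0) := by
    intro D
    rw [Finset.sum_boole]
  simp_rw [hswap]
  rw [Finset.sum_comm]
  refine Finset.sum_congr rfl fun v _ => ?_
  rw [Finset.sum_boole]
  have hfilter : (G.edgeFinset.powersetCard 2).filter (fun D => ∀ e ∈ D, v ∈ e)
      = (G.incidenceFinset v).powersetCard 2 := by
    ext D
    simp only [Finset.mem_filter, Finset.mem_powersetCard,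
      SimpleGraph.incidenceFinset_eq_filter]
    constructor
    · rintro ⟨⟨hDE, hc⟩, hv⟩
      exact ⟨fun e he => Finset.mem_filter.mpr ⟨hDE he, hv e he⟩, hc⟩
    · rintro ⟨hDf, hc⟩
      exact ⟨⟨fun e he => (Finset.mem_filter.mp (hDf he)).1, hc⟩,
        fun e he => (Finset.mem_filter.mp (hDf he)).2⟩
  rw [hfilter, Finset.card_powersetCard, SimpleGraph.card_incidenceFinset_eq_degree]

lemma abs_half : ‖(1/2 : ℂ)‖ = 1/2 := by
  rw [norm_div, norm_one, Complex.norm_two]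

lemma abs_quarter : ‖(1/4 : ℂ)‖ = 1/4 := by
  have : ((1:ℂ)/4) = ((1/4 : ℝ) : ℂ) := by norm_num
  rw [this, Complex.norm_real]
  norm_num

end TL

/-- the 2-level approximated randomization overlap is a lower bound on
the full randomization overlap L(ρ^p_G) = Tr[|G⟩⟨G| ρ^p_G], for p ∈ [1/2,1]. -/
theorem two_level_approx_lower_bound (n : ℕ) (G : SimpleGraph (Fin n))
    [DecidableRel G.Adj] (p : ℝ) (hp0 : 1 / 2 ≤ p) (hp1 : p ≤ 1) :
    ∑ F ∈ G.edgeFinset.powerset,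
        p ^ F.card * (1 - p) ^ (G.edgeFinset.card - F.card) *
          ‖ip (gs n G.edgeFinset) (gs n F)‖ ^ 2
      ≥ p ^ G.edgeFinset.card
        + 1 / 4 * (1 - p) * p ^ (G.edgeFinset.card - 1) * (G.edgeFinset.card : ℝ)
        + 1 / 16 * (1 - p) ^ 2 * p ^ (G.edgeFinset.card - 2) *
            (((G.edgeFinset.card.choose 2 : ℕ) : ℝ)
              + 3 * ∑ v : Fin n, (((G.degree v).choose 2 : ℕ) : ℝ)) := by
  classical
  have hp : (0:ℝ) ≤ p := by linarith
  have hq : (0:ℝ) ≤ 1 - p := by linarith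
  set E := G.edgeFinset with hE
  set m := E.card with hm
  have hnd : ∀ e ∈ E, ¬ e.IsDiag := fun e he =>
    G.not_isDiag_of_mem_edgeSet (SimpleGraph.mem_edgeFinset.mp he)
  have hre : ∑ F ∈ E.powerset, p ^ F.card * (1 - p) ^ (m - F.card) *
        ‖ip (gs n E) (gs n F)‖ ^ 2
      = ∑ D ∈ E.powerset, p ^ (m - D.card) * (1 - p) ^ D.card *
        ‖ip (gs n E) (gs n (E \ D))‖ ^ 2 := by
    refine Finset.sum_nbij' (fun F => E \ F) (fun D => E \ D)
      (fun F _ => Finset.mem_powerset.mpr Finset.sdiff_subset)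
      (fun D _ => Finset.mem_powerset.mpr Finset.sdiff_subset)
      (fun F hF => Finset.sdiff_sdiff_eq_self (Finset.mem_powerset.mp hF))
      (fun D hD => Finset.sdiff_sdiff_eq_self (Finset.mem_powerset.mp hD))
      (fun F hF => ?_)
    have hFE := Finset.mem_powerset.mp hF
    have h1 : (E \ F).card = m - F.card := Finset.card_sdiff_of_subset hFE
    have h2 : m - (E \ F).card = F.card := by
      rw [h1]; exact Nat.sub_sub_self (Finset.card_le_card hFE)
    rw [h2, h1, Finset.sdiff_sdiff_eq_self hFE]
  rw [hre]
  have hU : (E.powersetCard 0 ∪ E.powersetCard 1 ∪ E.powersetCard 2) ⊆ E.powerset := by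
    intro D hD
    simp only [Finset.mem_union, Finset.mem_powersetCard] at hD
    rcases hD with (h | h) | h <;> exact Finset.mem_powerset.mpr h.1
  have hmono : ∑ D ∈ E.powersetCard 0 ∪ E.powersetCard 1 ∪ E.powersetCard 2,
        p ^ (m - D.card) * (1 - p) ^ D.card *
          ‖ip (gs n E) (gs n (E \ D))‖ ^ 2
      ≤ ∑ D ∈ E.powerset, p ^ (m - D.card) * (1 - p) ^ D.card *
          ‖ip (gs n E) (gs n (E \ D))‖ ^ 2 :=
    Finset.sum_le_sum_of_subset_of_nonneg hU (fun D _ _ =>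
      mul_nonneg (mul_nonneg (pow_nonneg hp _) (pow_nonneg hq _)) (sq_nonneg _))
  have hd01 : Disjoint (E.powersetCard 0) (E.powersetCard 1) := by
    rw [Finset.disjoint_left]
    intro D h0 h1
    have e0 := (Finset.mem_powersetCard.mp h0).2
    have e1 := (Finset.mem_powersetCard.mp h1).2
    omega
  have hd012 : Disjoint (E.powersetCard 0 ∪ E.powersetCard 1) (E.powersetCard 2) := by
    rw [Finset.disjoint_left]
    intro D hD h2
    have e2 := (Finset.mem_powersetCard.mp h2).2
    rcases Finset.mem_union.mp hD with h | h <;>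
      · have := (Finset.mem_powersetCard.mp h).2; omega
  have hS0 : ∑ D ∈ E.powersetCard 0,
      p ^ (m - D.card) * (1 - p) ^ D.card *
        ‖ip (gs n E) (gs n (E \ D))‖ ^ 2 = p ^ m := by
    rw [Finset.powersetCard_zero, Finset.sum_singleton, Finset.sdiff_empty, TL.ip_self]
    simp
  have hS1 : ∑ D ∈ E.powersetCard 1,
      p ^ (m - D.card) * (1 - p) ^ D.card *
        ‖ip (gs n E) (gs n (E \ D))‖ ^ 2
      = 1 / 4 * (1 - p) * p ^ (m - 1) * (m : ℝ) := by
    have h1 : ∀ D ∈ E.powersetCard 1,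
        p ^ (m - D.card) * (1 - p) ^ D.card *
          ‖ip (gs n E) (gs n (E \ D))‖ ^ 2
        = p ^ (m - 1) * (1 - p) * (1/4) := by
      intro D hD
      obtain ⟨hDE, hc⟩ := Finset.mem_powersetCard.mp hD
      obtain ⟨e, rfl⟩ := Finset.card_eq_one.mp hc
      have heE : e ∈ E := hDE (Finset.mem_singleton_self e)
      rw [TL.ip_single heE (hnd e heE), Finset.card_singleton, TL.abs_half]
      norm_num
    rw [Finset.sum_congr rfl h1, Finset.sum_const, Finset.card_powersetCard,
      Nat.choose_one_right, nsmul_eq_mul]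
    ring
  have hac := TL.adj_count G
  rw [← hE] at hac
  have hS2 : ∑ D ∈ E.powersetCard 2,
      p ^ (m - D.card) * (1 - p) ^ D.card *
        ‖ip (gs n E) (gs n (E \ D))‖ ^ 2
      = 1 / 16 * (1 - p) ^ 2 * p ^ (m - 2) *
          (((m.choose 2 : ℕ) : ℝ) + 3 * ∑ v : Fin n, (((G.degree v).choose 2 : ℕ) : ℝ)) := by
    have h1 : ∀ D ∈ E.powersetCard 2,
        p ^ (m - D.card) * (1 - p) ^ D.card *
          ‖ip (gs n E) (gs n (E \ D))‖ ^ 2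
        = p ^ (m - 2) * (1 - p) ^ 2 *
            (1/16 + 3/16 * (if ∃ v, ∀ e ∈ D, v ∈ e then (1:ℝ) else 0)) := by
      intro D hD
      obtain ⟨hDE, hc⟩ := Finset.mem_powersetCard.mp hD
      obtain ⟨e, f, hef, hDef⟩ := Finset.card_eq_two.mp hc
      subst hDef
      have heE : e ∈ E := hDE (Finset.mem_insert_self e {f})
      have hfE : f ∈ E := hDE (Finset.mem_insert_of_mem (Finset.mem_singleton_self f))
      have hadj : (∃ v, ∀ g ∈ ({e, f} : Finset (Sym2 (Fin n))), v ∈ g)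
          ↔ (∃ v, v ∈ e ∧ v ∈ f) := by
        constructor
        · rintro ⟨v, hv⟩
          exact ⟨v, hv e (Finset.mem_insert_self e {f}),
            hv f (Finset.mem_insert_of_mem (Finset.mem_singleton_self f))⟩
        · rintro ⟨v, hv1, hv2⟩
          refine ⟨v, fun g hg => ?_⟩
          rcases Finset.mem_insert.mp hg with h | h
          · exact h ▸ hv1
          · exact (Finset.mem_singleton.mp h) ▸ hv2
      rw [TL.ip_pair heE hfE (hnd e heE) (hnd f hfE) hef, hc]
      by_cases h : ∃ v, v ∈ e ∧ v ∈ f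
      · rw [if_pos h, if_pos (hadj.mpr h)]
        have h4 : (4 * (1/2 : ℂ) ^ 3) = 1/2 := by norm_num
        rw [h4, TL.abs_half]
        norm_num
      · rw [if_neg h, if_neg (fun hx => h (hadj.mp hx))]
        have h4 : (4 * (1/2 : ℂ) ^ 4) = 1/4 := by norm_num
        rw [h4, TL.abs_quarter]
        norm_num
    rw [Finset.sum_congr rfl h1, ← Finset.mul_sum, Finset.sum_add_distrib,
      Finset.sum_const, ← Finset.mul_sum, hac, Finset.card_powersetCard]
    ring
  have hsum : ∑ D ∈ E.powersetCard 0 ∪ E.powersetCard 1 ∪ E.powersetCard 2,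
        p ^ (m - D.card) * (1 - p) ^ D.card *
          ‖ip (gs n E) (gs n (E \ D))‖ ^ 2
      = p ^ m + 1 / 4 * (1 - p) * p ^ (m - 1) * (m : ℝ)
        + 1 / 16 * (1 - p) ^ 2 * p ^ (m - 2) *
            (((m.choose 2 : ℕ) : ℝ) + 3 * ∑ v : Fin n, (((G.degree v).choose 2 : ℕ) : ℝ)) := by
    rw [Finset.sum_union hd012, Finset.sum_union hd01, hS0, hS1, hS2]
  rw [ge_iff_le, ← hsum]
  exact hmono
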